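/- A schedule s is conflict serializable if and only if the conflict graph CG(s) (whose nodes are transactions and with an edge from T_i to T_j whenever some operation of T_i conflicts with an operation of T_j and the dependency b_i →_s a_j holds) is acyclic. -/

import Mathlib

/-! ## A framework for multiversion schedules over workloads of transactions.

A transaction is a finite list of operations (each on a tuple, with a read set
and a write set of attributes), implicitly followed by a commit.  A workload
assigns to every transaction (element of `Txn`) its list of operations. -/

/-- An operation on a tuple, reading the attributes in `rs` and writing those in `ws`. -/
structure Oper (Tuple Attr : Type) where
  tuple : Tuple
  rs : Finset Attr
  ws : Finset Attr

/-- A set of transactions: every transaction `T : Txn` is the sequence `prog T`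
of its operations (its commit is implicit, as a separate event). -/
structure Workload (Tuple Attr Txn : Type) where
  prog : Txn → List (Oper Tuple Attr)

namespace Workload

variable {Tuple Attr Txn : Type} [DecidableEq Attr]

/-- The operations occurring in the workload: the `i`-th operation of transaction `T`. -/
def Op (W : Workload Tuple Attr Txn) : Type :=
  Σ T : Txn, Fin (W.prog T).length

namespace Op

variable {W : Workload Tuple Attr Txn}

def oper (a : W.Op) : Oper Tuple Attr := (W.prog a.1).get a.2
def tuple (a : W.Op) : Tuple := a.oper.tuple
def rs (a : W.Op) : Finset Attr := a.oper.rs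
def ws (a : W.Op) : Finset Attr := a.oper.ws

end Op

/-- ww-conflict: both operations write a common attribute of the same tuple. -/
def wwConflict {W : Workload Tuple Attr Txn} (b a : W.Op) : Prop :=
  b.tuple = a.tuple ∧ b.1 ≠ a.1 ∧ (b.ws ∩ a.ws).Nonempty

/-- wr-conflict. -/
def wrConflict {W : Workload Tuple Attr Txn} (b a : W.Op) : Prop :=
  b.tuple = a.tuple ∧ b.1 ≠ a.1 ∧ (b.ws ∩ a.rs).Nonempty

/-- rw-conflict. -/
def rwConflict {W : Workload Tuple Attr Txn} (b a : W.Op) : Prop :=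
  b.tuple = a.tuple ∧ b.1 ≠ a.1 ∧ (b.rs ∩ a.ws).Nonempty

def conflict {W : Workload Tuple Attr Txn} (b a : W.Op) : Prop :=
  wwConflict b a ∨ wrConflict b a ∨ rwConflict b a

/-- The events of a schedule: operations and commits (the initial write `op₀` is
represented implicitly, as the `none` value of the version function). -/
inductive Event (W : Workload Tuple Attr Txn) where
  | op : W.Op → Event W
  | commit : Txn → Event W

/-- A multiversion schedule over the workload `W`: a total order `lt` (i.e. `<ₛ`) on events
extending the order of each transaction and placing each commit after the operations of
its transaction, a version function `version` (`none` standing for the initial write `op₀`)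
and a version order `vlt` (i.e. `≪ₛ`) on the write operations on each tuple. -/
structure Schedule (W : Workload Tuple Attr Txn) where
  lt : Event W → Event W → Prop
  lt_irrefl : ∀ e, ¬ lt e e
  lt_trans : ∀ {e f g}, lt e f → lt f g → lt e g
  lt_total : ∀ e f, e = f ∨ lt e f ∨ lt f e
  prog_order : ∀ a b : W.Op, a.1 = b.1 →
    ((a.2 : ℕ) < (b.2 : ℕ) ↔ lt (Event.op a) (Event.op b))
  commit_after : ∀ a : W.Op, lt (Event.op a) (Event.commit a.1)
  version : W.Op → Option W.Op
  version_write : ∀ a w, version a = some w →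
    w.tuple = a.tuple ∧ w.ws.Nonempty ∧ w ≠ a ∧ lt (Event.op w) (Event.op a)
  vlt : W.Op → W.Op → Prop
  vlt_write : ∀ {a b}, vlt a b → a.tuple = b.tuple ∧ a.ws.Nonempty ∧ b.ws.Nonempty
  vlt_irrefl : ∀ a, ¬ vlt a a
  vlt_trans : ∀ {a b c}, vlt a b → vlt b c → vlt a c
  vlt_total : ∀ a b : W.Op, a.tuple = b.tuple → a.ws.Nonempty → b.ws.Nonempty →
    a = b ∨ vlt a b ∨ vlt b a

namespace Schedule

variable {W : Workload Tuple Attr Txn}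

/-- `≪ₛ` extended to `op₀` (`none`), which precedes every write. -/
def vlt0 (s : Schedule W) : Option W.Op → W.Op → Prop
  | none, _ => True
  | some w, a => s.vlt w a

/-- The dependency relation `b →ₛ a` between conflicting operations. -/
def dep (s : Schedule W) (b a : W.Op) : Prop :=
  (wwConflict b a ∧ s.vlt b a) ∨
  (wrConflict b a ∧ (s.version a = some b ∨ ∃ w, s.version a = some w ∧ s.vlt b w)) ∨
  (rwConflict b a ∧ s.vlt0 (s.version b) a)

/-- Single version schedule: the version order coincides with `<ₛ` and every read
observes the last written version. -/
def SingleVersion (s : Schedule W) : Prop :=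
  (∀ a b : W.Op, a.tuple = b.tuple → a.ws.Nonempty → b.ws.Nonempty →
      (s.vlt a b ↔ s.lt (Event.op a) (Event.op b))) ∧
  (∀ a c : W.Op, a.rs.Nonempty → c.tuple = a.tuple → c.ws.Nonempty →
      s.lt (Event.op c) (Event.op a) →
      ¬ (s.version a = none ∨ ∃ w, s.version a = some w ∧ s.lt (Event.op w) (Event.op c)))

/-- Serial schedule: transactions are not interleaved. -/
def Serial (s : Schedule W) : Prop :=
  ∀ a b c : W.Op, s.lt (Event.op a) (Event.op b) → s.lt (Event.op b) (Event.op c) →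
    a.1 = c.1 → a.1 = b.1

end Schedule

/-- Two schedules over the same set of transactions are conflict equivalent if they
agree on the dependencies between all pairs of conflicting operations. -/
def ConflictEquiv {W : Workload Tuple Attr Txn} (s s' : Schedule W) : Prop :=
  ∀ b a : W.Op, conflict b a → (s.dep b a ↔ s'.dep b a)

/-- A schedule is conflict serializable if it is conflict equivalent to a
single version serial schedule. -/
def Schedule.ConflictSerializable {W : Workload Tuple Attr Txn} (s : Schedule W) : Prop :=
  ∃ s' : Schedule W, s'.SingleVersion ∧ s'.Serial ∧ ConflictEquiv s s'

/-- Edges of the conflict graph of a schedule: there is an edge from `T` to `T'`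
if some operation of `T` conflicts with an operation of `T'` and the dependency holds. -/
def Schedule.cgEdge {W : Workload Tuple Attr Txn} (s : Schedule W) (T T' : Txn) : Prop :=
  ∃ b a : W.Op, b.1 = T ∧ a.1 = T' ∧ conflict b a ∧ s.dep b a

end Workload

namespace Workload

variable {Tuple Attr Txn : Type} [DecidableEq Attr]

open Event

/-! ### Generic lemmas about conflicts and dependencies -/

lemma inter_left {s t : Finset Attr} (h : (s ∩ t).Nonempty) : s.Nonempty := by
  obtain ⟨x, hx⟩ := h; exact ⟨x, (Finset.mem_inter.mp hx).1⟩

lemma inter_right {s t : Finset Attr} (h : (s ∩ t).Nonempty) : t.Nonempty := by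
  obtain ⟨x, hx⟩ := h; exact ⟨x, (Finset.mem_inter.mp hx).2⟩

lemma conflict_ne {W : Workload Tuple Attr Txn} {b a : W.Op} (h : conflict b a) :
    b.1 ≠ a.1 := by
  rcases h with ⟨_, hn, _⟩ | ⟨_, hn, _⟩ | ⟨_, hn, _⟩ <;> exact hn

lemma conflict_symm {W : Workload Tuple Attr Txn} {b a : W.Op} (h : conflict b a) :
    conflict a b := by
  rcases h with ⟨ht, hn, hs⟩ | ⟨ht, hn, hs⟩ | ⟨ht, hn, hs⟩
  · exact Or.inl ⟨ht.symm, hn.symm, by rwa [Finset.inter_comm]⟩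
  · exact Or.inr (Or.inr ⟨ht.symm, hn.symm, by rwa [Finset.inter_comm]⟩)
  · exact Or.inr (Or.inl ⟨ht.symm, hn.symm, by rwa [Finset.inter_comm]⟩)

/-- On any conflicting pair, the dependency holds in at least one direction. -/
lemma dep_total {W : Workload Tuple Attr Txn} (s : Schedule W) {b a : W.Op}
    (h : conflict b a) : s.dep b a ∨ s.dep a b := by
  rcases h with ⟨ht, hn, hs⟩ | ⟨ht, hn, hs⟩ | ⟨ht, hn, hs⟩
  · have hbw := inter_left hs
    have haw := inter_right hs
    have hne : b ≠ a := fun e => hn (congrArg Sigma.fst e)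
    rcases s.vlt_total b a ht hbw haw with rfl | hv | hv
    · exact absurd rfl hne
    · exact Or.inl (Or.inl ⟨⟨ht, hn, hs⟩, hv⟩)
    · exact Or.inr (Or.inl ⟨⟨ht.symm, hn.symm, by rwa [Finset.inter_comm]⟩, hv⟩)
  · have hbw := inter_left hs
    have hrw : rwConflict a b := ⟨ht.symm, hn.symm, by rwa [Finset.inter_comm]⟩
    cases hva : s.version a with
    | none =>
        refine Or.inr (Or.inr (Or.inr ⟨hrw, ?_⟩))
        rw [hva]; exact trivial
    | some w =>
        obtain ⟨hwt, hww, -, -⟩ := s.version_write a w hva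
        rcases s.vlt_total b w (ht.trans hwt.symm) hbw hww with rfl | hv | hv
        · exact Or.inl (Or.inr (Or.inl ⟨⟨ht, hn, hs⟩, Or.inl hva⟩))
        · exact Or.inl (Or.inr (Or.inl ⟨⟨ht, hn, hs⟩, Or.inr ⟨w, hva, hv⟩⟩))
        · refine Or.inr (Or.inr (Or.inr ⟨hrw, ?_⟩))
          rw [hva]; exact hv
  · have haw := inter_right hs
    have hwr : wrConflict a b := ⟨ht.symm, hn.symm, by rwa [Finset.inter_comm]⟩
    cases hvb : s.version b with
    | none =>
        refine Or.inl (Or.inr (Or.inr ⟨⟨ht, hn, hs⟩, ?_⟩))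
        rw [hvb]; exact trivial
    | some w =>
        obtain ⟨hwt, hww, -, -⟩ := s.version_write b w hvb
        rcases s.vlt_total w a (hwt.trans ht) hww haw with rfl | hv | hv
        · exact Or.inr (Or.inr (Or.inl ⟨hwr, Or.inl hvb⟩))
        · refine Or.inl (Or.inr (Or.inr ⟨⟨ht, hn, hs⟩, ?_⟩))
          rw [hvb]; exact hv
        · exact Or.inr (Or.inr (Or.inl ⟨hwr, Or.inr ⟨w, hvb, hv⟩⟩))

/-- In a single-version schedule, a dependency between operations of different
transactions implies the schedule order. -/
lemma dep_lt_of_sv {W : Workload Tuple Attr Txn} {s : Schedule W}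
    (hsv : s.SingleVersion) {b a : W.Op} (hd : s.dep b a) (hn : b.1 ≠ a.1) :
    s.lt (Event.op b) (Event.op a) := by
  rcases hd with ⟨⟨ht, -, hs'⟩, hv⟩ | ⟨⟨ht, -, hs'⟩, hv⟩ | ⟨⟨ht, -, hs'⟩, hv⟩
  · exact (hsv.1 b a ht (inter_left hs') (inter_right hs')).mp hv
  · rcases hv with hv | ⟨w, hw, hv⟩
    · exact (s.version_write a b hv).2.2.2
    · obtain ⟨hwt, hww, -, hlt⟩ := s.version_write a w hw
      exact s.lt_trans ((hsv.1 b w (ht.trans hwt.symm) (inter_left hs') hww).mp hv) hlt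
  · have hbr := inter_left hs'
    have haw := inter_right hs'
    rcases s.lt_total (Event.op b) (Event.op a) with he | h | h
    · injection he with he'
      exact absurd (congrArg Sigma.fst he') hn
    · exact h
    · exfalso
      have h2 := hsv.2 b a hbr ht.symm haw h
      cases hvb : s.version b with
      | none => exact h2 (Or.inl hvb)
      | some w =>
          rw [hvb] at hv
          obtain ⟨hwt, hww, -, -⟩ := s.version_write b w hvb
          have hlwa := (hsv.1 w a (hwt.trans ht) hww haw).mp hv
          exact h2 (Or.inr ⟨w, hvb, hlwa⟩)

/-- In a serial schedule, an operation before some operation of another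
transaction is before all operations of that transaction. -/
lemma lt_op_all {W : Workload Tuple Attr Txn} {s : Schedule W} (hser : s.Serial)
    {b a a' : W.Op} (h : s.lt (Event.op b) (Event.op a)) (hn : b.1 ≠ a.1)
    (ha : a'.1 = a.1) : s.lt (Event.op b) (Event.op a') := by
  rcases s.lt_total (Event.op b) (Event.op a') with he | h' | h'
  · injection he with he'
    exact absurd ((congrArg Sigma.fst he').trans ha) hn
  · exact h'
  · exact absurd ((hser a' b a h' h ha).symm.trans ha) hn

/-- Any serial single-version schedule has an acyclic conflict graph. -/
lemma acyclic_of_serial_sv {W : Workload Tuple Attr Txn} {s' : Schedule W}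
    (hsv : s'.SingleVersion) (hser : s'.Serial) :
    ∀ T : Txn, ¬ Relation.TransGen s'.cgEdge T T := by
  set R : Txn → Txn → Prop := fun T T' =>
    T ≠ T' ∧ ∃ b a : W.Op, b.1 = T ∧ a.1 = T' ∧ s'.lt (Event.op b) (Event.op a) with hR
  have hsub : ∀ T T', s'.cgEdge T T' → R T T' := by
    rintro T T' ⟨b, a, rfl, rfl, hc, hd⟩
    exact ⟨conflict_ne hc, b, a, rfl, rfl, dep_lt_of_sv hsv hd (conflict_ne hc)⟩
  have hasym : ∀ {T T'}, R T T' → R T' T → False := by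
    rintro T T' ⟨hne, b, a, hb, ha, hlt⟩ ⟨hne', b', a', hb', ha', hlt'⟩
    have h1 : s'.lt (Event.op b) (Event.op b') :=
      lt_op_all hser hlt (by rw [hb, ha]; exact hne) (by rw [hb', ha])
    have h2 : s'.lt (Event.op b') (Event.op b) :=
      lt_op_all hser hlt' (by rw [hb', ha']; exact hne') (by rw [hb, ha'])
    exact s'.lt_irrefl _ (s'.lt_trans h1 h2)
  have htrans : Transitive R := by
    rintro T T' T'' h1 h2
    by_cases he : T = T''
    · exact absurd h2 (fun h2' => (hasym h1 (he ▸ h2')).elim)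
    obtain ⟨hne, b, a, hb, ha, hlt⟩ := h1
    obtain ⟨hne', b', a', hb', ha', hlt'⟩ := h2
    have h3 : s'.lt (Event.op b) (Event.op b') :=
      lt_op_all hser hlt (by rw [hb, ha]; exact hne) (by rw [hb', ha])
    exact ⟨he, b, a', hb, ha', s'.lt_trans h3 hlt'⟩
  intro T hT
  have : R T T := by
    rw [← @Relation.transGen_eq_self _ R ⟨fun _ _ _ h1 h2 => htrans h1 h2⟩]
    exact Relation.TransGen.mono hsub _ _ hT
  exact this.1 rfl

/-! ### Construction of a serial single-version schedule from a linear order on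
transactions -/

section Construct

variable [Fintype Txn] {W : Workload Tuple Attr Txn}

/-- The transaction of an event. -/
def etxn : Event W → Txn
  | .op a => a.1
  | .commit T => T

/-- Position of an event within its transaction. -/
def ekey : Event W → ℕ
  | .op a => a.2
  | .commit T => (W.prog T).length

lemma eq_of_etxn_ekey {e f : Event W} (ht : etxn e = etxn f) (hk : ekey e = ekey f) :
    e = f := by
  cases e with
  | op a =>
      cases f with
      | op b =>
          obtain ⟨T, i⟩ := a
          obtain ⟨T', j⟩ := b
          simp only [etxn] at ht
          subst ht
          simp only [ekey] at hk
          exact congrArg Event.op (congrArg (Sigma.mk T) (Fin.ext hk))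
      | commit T =>
          simp only [etxn] at ht
          simp only [ekey] at hk
          exact absurd hk (by rw [← ht]; exact Nat.ne_of_lt a.2.isLt)
  | commit T =>
      cases f with
      | op b =>
          simp only [etxn] at ht
          simp only [ekey] at hk
          exact absurd hk.symm (by rw [ht]; exact Nat.ne_of_lt b.2.isLt)
      | commit T' =>
          simp only [etxn] at ht
          rw [ht]

variable (ord : Txn → Txn → Prop)

/-- The serial order of events: lexicographic on (transaction, position). -/
def slt (e f : Event W) : Prop :=
  ord (etxn e) (etxn f) ∨ (etxn e = etxn f ∧ ekey e < ekey f)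

lemma slt_irrefl (hirr : ∀ T, ¬ ord T T) (e : Event W) : ¬ slt ord e e := by
  rintro (h | ⟨-, h⟩)
  · exact hirr _ h
  · exact Nat.lt_irrefl _ h

lemma slt_trans (htr : ∀ {a b c}, ord a b → ord b c → ord a c) {e f g : Event W} (h1 : slt ord e f) (h2 : slt ord f g) :
    slt ord e g := by
  rcases h1 with h1 | ⟨h1, k1⟩ <;> rcases h2 with h2 | ⟨h2, k2⟩
  · exact Or.inl (htr h1 h2)
  · exact Or.inl (h2 ▸ h1)
  · exact Or.inl (h1 ▸ h2)
  · exact Or.inr ⟨h1.trans h2, k1.trans k2⟩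

lemma slt_total (hto : ∀ a b : Txn, a ≠ b → ord a b ∨ ord b a) (e f : Event W) : e = f ∨ slt ord e f ∨ slt ord f e := by
  by_cases h : etxn e = etxn f
  · rcases Nat.lt_trichotomy (ekey e) (ekey f) with hk | hk | hk
    · exact Or.inr (Or.inl (Or.inr ⟨h, hk⟩))
    · exact Or.inl (eq_of_etxn_ekey h hk)
    · exact Or.inr (Or.inr (Or.inr ⟨h.symm, hk⟩))
  · rcases hto _ _ h with h' | h'
    · exact Or.inr (Or.inl (Or.inl h'))
    · exact Or.inr (Or.inr (Or.inl h'))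

lemma oplt_total (hto : ∀ a b : Txn, a ≠ b → ord a b ∨ ord b a) (a b : W.Op) :
    a = b ∨ slt ord (Event.op a) (Event.op b) ∨ slt ord (Event.op b) (Event.op a) := by
  rcases slt_total ord hto (Event.op a) (Event.op b) with he | h | h
  · injection he with he'; exact Or.inl he'
  · exact Or.inr (Or.inl h)
  · exact Or.inr (Or.inr h)

lemma slt_op_iff_ord {b a : W.Op} (h : b.1 ≠ a.1) :
    slt ord (Event.op b) (Event.op a) ↔ ord b.1 a.1 := by
  constructor
  · rintro (h' | ⟨h', -⟩)
    · exact h'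
    · exact absurd h' h
  · exact Or.inl

/-- Every nonempty finite set has a greatest element w.r.t. a transitive total
relation. -/
lemma exists_greatest {α : Type*} (r : α → α → Prop)
    (rtr : ∀ {a b c}, r a b → r b c → r a c)
    (rto : ∀ a b : α, a = b ∨ r a b ∨ r b a) :
    ∀ s : Finset α, s.Nonempty → ∃ g ∈ s, ∀ b ∈ s, b ≠ g → r b g := by
  classical
  intro s
  induction s using Finset.induction_on with
  | empty => rintro ⟨x, hx⟩; simp at hx
  | @insert x t hx ih =>
      intro _
      rcases t.eq_empty_or_nonempty with rfl | h
      · exact ⟨x, by simp, by simp⟩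
      · obtain ⟨g, hg, hmax⟩ := ih h
        rcases rto x g with rfl | h1 | h1
        · exact absurd hg hx
        · refine ⟨g, Finset.mem_insert_of_mem hg, ?_⟩
          intro b hb hne
          rcases Finset.mem_insert.mp hb with rfl | hb'
          · exact h1
          · exact hmax b hb' hne
        · refine ⟨x, Finset.mem_insert_self _ _, ?_⟩
          intro b hb hne
          rcases Finset.mem_insert.mp hb with rfl | hb'
          · exact absurd rfl hne
          · by_cases hbg : b = g
            · exact hbg ▸ h1
            · exact rtr (hmax b hb' hbg) h1

noncomputable instance instFintypeOp : Fintype W.Op := by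
  classical exact inferInstanceAs (Fintype (Σ T : Txn, Fin (W.prog T).length))

/-- The writes on `a.tuple` before `a`, in the serial order. -/
noncomputable def writers (a : W.Op) : Finset W.Op :=
  @Finset.filter _
    (fun w => w.tuple = a.tuple ∧ w.ws.Nonempty ∧ slt ord (Event.op w) (Event.op a))
    (fun _ => Classical.dec _) Finset.univ

lemma mem_writers {a w : W.Op} :
    w ∈ writers ord a ↔
      w.tuple = a.tuple ∧ w.ws.Nonempty ∧ slt ord (Event.op w) (Event.op a) := by
  refine ⟨fun h => ?_, fun h => ?_⟩
  · exact ((@Finset.mem_filter W.Op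
      (fun w => w.tuple = a.tuple ∧ w.ws.Nonempty ∧ slt ord (Event.op w) (Event.op a))
      (fun _ => Classical.dec _) Finset.univ w).mp h).2
  · exact (@Finset.mem_filter W.Op
      (fun w => w.tuple = a.tuple ∧ w.ws.Nonempty ∧ slt ord (Event.op w) (Event.op a))
      (fun _ => Classical.dec _) Finset.univ w).mpr ⟨Finset.mem_univ _, h⟩

lemma exists_version (htr : ∀ {a b c}, ord a b → ord b c → ord a c)
    (hto : ∀ a b : Txn, a ≠ b → ord a b ∨ ord b a) (a : W.Op) (h : (writers ord a).Nonempty) :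
    ∃ g ∈ writers ord a, ∀ b ∈ writers ord a, b ≠ g →
      slt ord (Event.op b) (Event.op g) :=
  exists_greatest (fun x y : W.Op => slt ord (Event.op x) (Event.op y))
    (fun h1 h2 => slt_trans ord htr h1 h2) (oplt_total ord hto) _ h

/-- The version function: the last write before `a` on `a.tuple`, if any. -/
noncomputable def mkVersion (htr : ∀ {a b c}, ord a b → ord b c → ord a c)
    (hto : ∀ a b : Txn, a ≠ b → ord a b ∨ ord b a) (a : W.Op) : Option W.Op :=
  if h : (writers ord a).Nonempty then
    some (exists_version ord htr hto a h).choose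
  else none

lemma mkVersion_eq_some (htr : ∀ {a b c}, ord a b → ord b c → ord a c)
    (hto : ∀ a b : Txn, a ≠ b → ord a b ∨ ord b a) (a : W.Op) (h : (writers ord a).Nonempty) :
    ∃ g, mkVersion ord htr hto a = some g ∧ g ∈ writers ord a ∧
      ∀ b ∈ writers ord a, b ≠ g → slt ord (Event.op b) (Event.op g) := by
  obtain ⟨hg, hmax⟩ := (exists_version ord htr hto a h).choose_spec
  exact ⟨_, dif_pos h, hg, hmax⟩

lemma mkVersion_eq_none (htr : ∀ {a b c}, ord a b → ord b c → ord a c)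
    (hto : ∀ a b : Txn, a ≠ b → ord a b ∨ ord b a) (a : W.Op) (h : ¬ (writers ord a).Nonempty) :
    mkVersion ord htr hto a = none := dif_neg h

/-- The serial single-version schedule induced by a strict linear order on
transactions. -/
noncomputable def mkSchedule (hirr : ∀ T, ¬ ord T T) (htr : ∀ {a b c}, ord a b → ord b c → ord a c)
    (hto : ∀ a b : Txn, a ≠ b → ord a b ∨ ord b a) : Schedule W where
  lt := slt ord
  lt_irrefl := slt_irrefl ord hirr
  lt_trans := slt_trans ord htr
  lt_total := slt_total ord hto
  prog_order := by
    intro a b h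
    constructor
    · intro hk
      exact Or.inr ⟨h, hk⟩
    · rintro (h' | ⟨-, hk⟩)
      · have h'' : ord a.1 b.1 := h'
        rw [h] at h''
        exact absurd h'' (hirr _)
      · exact hk
  commit_after := fun a => Or.inr ⟨rfl, a.2.isLt⟩
  version := mkVersion ord htr hto
  version_write := by
    intro a w h
    by_cases hne : (writers ord a).Nonempty
    · obtain ⟨g, hg, hmem, -⟩ := mkVersion_eq_some ord htr hto a hne
      rw [h] at hg
      obtain rfl : w = g := Option.some.inj hg
      obtain ⟨ht, hws, hlt⟩ := (mem_writers ord).mp hmem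
      refine ⟨ht, hws, ?_, hlt⟩
      rintro rfl
      exact slt_irrefl ord hirr _ hlt
    · rw [mkVersion_eq_none ord htr hto a hne] at h
      exact absurd h (by simp)
  vlt := fun x y => x.tuple = y.tuple ∧ x.ws.Nonempty ∧ y.ws.Nonempty ∧
    slt ord (Event.op x) (Event.op y)
  vlt_write := fun h => ⟨h.1, h.2.1, h.2.2.1⟩
  vlt_irrefl := fun x h => slt_irrefl ord hirr _ h.2.2.2
  vlt_trans := fun h1 h2 =>
    ⟨h1.1.trans h2.1, h1.2.1, h2.2.2.1, slt_trans ord htr h1.2.2.2 h2.2.2.2⟩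
  vlt_total := by
    intro a b ht h1 h2
    rcases oplt_total ord hto a b with rfl | h | h
    · exact Or.inl rfl
    · exact Or.inr (Or.inl ⟨ht, h1, h2, h⟩)
    · exact Or.inr (Or.inr ⟨ht.symm, h2, h1, h⟩)

lemma mkSchedule_sv (hirr : ∀ T, ¬ ord T T) (htr : ∀ {a b c}, ord a b → ord b c → ord a c)
    (hto : ∀ a b : Txn, a ≠ b → ord a b ∨ ord b a) : (mkSchedule ord hirr htr hto : Schedule W).SingleVersion := by
  constructor
  · intro a b ht h1 h2
    exact ⟨fun h => h.2.2.2, fun h => ⟨ht, h1, h2, h⟩⟩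
  · intro a c har hct hcw hlt
    have hc : c ∈ writers ord a := (mem_writers ord).mpr ⟨hct, hcw, hlt⟩
    have hne : (writers ord a).Nonempty := ⟨c, hc⟩
    obtain ⟨g, hg, hmem, hmax⟩ := mkVersion_eq_some ord htr hto a hne
    rintro (h | ⟨w, hw, hwc⟩)
    · rw [show (mkSchedule ord hirr htr hto : Schedule W).version = mkVersion ord htr hto from rfl] at h
      rw [hg] at h
      exact absurd h (by simp)
    · rw [show (mkSchedule ord hirr htr hto : Schedule W).version = mkVersion ord htr hto from rfl] at hw
      rw [hg] at hw
      injection hw with hwg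
      subst hwg
      by_cases hcg : c = g
      · exact slt_irrefl ord hirr _ (hcg ▸ hwc)
      · exact slt_irrefl ord hirr _ (slt_trans ord htr (hmax c hc hcg) hwc)

lemma mkSchedule_serial (hirr : ∀ T, ¬ ord T T) (htr : ∀ {a b c}, ord a b → ord b c → ord a c)
    (hto : ∀ a b : Txn, a ≠ b → ord a b ∨ ord b a) : (mkSchedule ord hirr htr hto : Schedule W).Serial := by
  intro a b c h1 h2 hac
  rcases h1 with h1 | ⟨h1, -⟩
  · rcases h2 with h2 | ⟨h2, -⟩
    · have h3 : ord a.1 c.1 := htr h1 h2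
      rw [hac] at h3
      exact absurd h3 (hirr _)
    · have h2' : b.1 = c.1 := h2
      have h1' : ord a.1 b.1 := h1
      rw [h2', ← hac] at h1'
      exact absurd h1' (hirr _)
  · exact h1

end Construct

end Workload

open Workload in
/-- A schedule `s` is conflict serializable iff its conflict graph
is acyclic. -/
theorem conflictSerializable_iff_acyclic_conflictGraph
    {Tuple Attr Txn : Type} [DecidableEq Attr] [Fintype Txn]
    (W : Workload Tuple Attr Txn) (s : Schedule W) :
    s.ConflictSerializable ↔ ∀ T : Txn, ¬ Relation.TransGen s.cgEdge T T := by
  constructor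
  · rintro ⟨s', hsv, hser, heq⟩ T hT
    refine acyclic_of_serial_sv hsv hser T (Relation.TransGen.mono (show ∀ T₁ T₂, s.cgEdge T₁ T₂ → s'.cgEdge T₁ T₂ from ?_) _ _ hT)
    rintro T₁ T₂ ⟨b, a, hb, ha, hc, hd⟩
    exact ⟨b, a, hb, ha, hc, (heq b a hc).mp hd⟩
  · intro hac
    classical
    set r : Txn → Txn → Prop := fun T T' => Relation.TransGen s.cgEdge T T' ∨ T = T'
      with hr
    haveI : IsRefl Txn r := ⟨fun T => Or.inr rfl⟩
    haveI : IsTrans Txn r := by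
      constructor
      rintro a b c (h | rfl) (h' | rfl)
      · exact Or.inl (h.trans h')
      · exact Or.inl h
      · exact Or.inl h'
      · exact Or.inr rfl
    haveI : IsAntisymm Txn r := by
      constructor
      rintro a b (h | rfl) h2
      · rcases h2 with h' | rfl
        · exact absurd (h.trans h') (hac a)
        · rfl
      · rfl
    haveI : IsPreorder Txn r := { }
    haveI : IsPartialOrder Txn r := { }
    obtain ⟨lin, hlin, hext⟩ := extend_partialOrder r
    haveI := hlin
    set ord : Txn → Txn → Prop := fun T T' => lin T T' ∧ T ≠ T' with hord
    have hirr : ∀ T, ¬ ord T T := fun T h => h.2 rfl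
    have htr : ∀ {a b c}, ord a b → ord b c → ord a c := by
      rintro a b c ⟨h1, n1⟩ ⟨h2, n2⟩
      refine ⟨IsTrans.trans _ _ _ h1 h2, ?_⟩
      rintro rfl
      exact n1 (Std.Antisymm.antisymm _ _ h1 h2)
    have hto : ∀ a b : Txn, a ≠ b → ord a b ∨ ord b a := by
      intro a b hne
      rcases Std.Total.total (r := lin) a b with h | h
      · exact Or.inl ⟨h, hne⟩
      · exact Or.inr ⟨h, hne.symm⟩
    have hext' : ∀ T T', s.cgEdge T T' → ord T T' := by
      intro T T' h
      have hne : T ≠ T' := by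
        rintro rfl
        exact hac T (Relation.TransGen.single h)
      exact ⟨hext _ _ (Or.inl (Relation.TransGen.single h)), hne⟩
    set s' : Schedule W := mkSchedule ord hirr htr hto with hs'
    have hsv := mkSchedule_sv ord hirr htr hto (W := W)
    have hser := mkSchedule_serial ord hirr htr hto (W := W)
    refine ⟨s', hsv, hser, ?_⟩
    have claim_s : ∀ {x y : W.Op}, conflict x y → s.dep x y → ord x.1 y.1 :=
      fun hc hd => hext' _ _ ⟨_, _, rfl, rfl, hc, hd⟩
    have claim_s' : ∀ {x y : W.Op}, conflict x y → s'.dep x y → ord x.1 y.1 := by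
      intro x y hc hd
      have hlt := dep_lt_of_sv hsv hd (conflict_ne hc)
      exact (slt_op_iff_ord ord (conflict_ne hc)).mp hlt
    have hA : ∀ {T T'}, ord T T' → ord T' T → False :=
      fun h1 h2 => hirr _ (htr h1 h2)
    intro b a hc
    constructor
    · intro hd
      rcases dep_total s' hc with h | h
      · exact h
      · exact absurd (claim_s hc hd) (fun h' => hA h' (claim_s' (conflict_symm hc) h))
    · intro hd
      rcases dep_total s hc with h | h
      · exact h
      · exact absurd (claim_s' hc hd) (fun h' => hA h' (claim_s (conflict_symm hc) h))
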